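/- Let f: ℝⁿ → ℝ be twice continuously differentiable with Hessian H(θ) that is L-Lipschitz in spectral norm, and let θ* be a minimizer with gradient g(θ) = ∇f(θ). Suppose at iteration t the update is θ^{t+1} = θ^t − η Ĥ^{-1}g(θ^t), where Ĥ is symmetric with Ĥ ⪰ ρ̄ I and ‖Ĥ − H(θ^{k})‖ ≤ ρ̄ − λ̄ₙ for some earlier point θ^k and constants ρ̄ ≥ λ̄ₙ > 0. Then ‖θ^{t+1} − θ*‖ ≤ c₁‖θ^t − θ*‖ + c₂‖θ^t − θ*‖² with c₁ = (1 − λ̄ₙ/ρ̄) + (L/ρ̄)‖θ^t − θ^k‖ + (1−η)‖H(θ^t)‖/ρ̄ and c₂ = ηL/(2ρ̄). -/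

import Mathlib

/-- The Hessian of `f` as a continuous linear map, `Hess f θ = D(∇f)(θ)`. -/
noncomputable def hess {n : ℕ} (f : EuclideanSpace ℝ (Fin n) → ℝ)
    (θ : EuclideanSpace ℝ (Fin n)) :
    EuclideanSpace ℝ (Fin n) →L[ℝ] EuclideanSpace ℝ (Fin n) :=
  fderiv ℝ (gradient f) θ

private lemma stmt12_arith (L ρbar lambar η A B C : ℝ) (hρ : ρbar ≠ 0) :
    ((ρbar - lambar) * A + L * B * A + (1 - η) * (C * A) + η * (L / 2 * A ^ 2)) / ρbar
      = ((1 - lambar / ρbar) + (L / ρbar) * B + (1 - η) * C / ρbar) * A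
        + (η * L / (2 * ρbar)) * A ^ 2 := by
  field_simp

/-- convergence bound of a Newton-type step with an outdated
approximate Hessian `Ĥ` satisfying `Ĥ ⪰ ρ̄I` and `‖Ĥ − H(θᵏ)‖ ≤ ρ̄ − λ̄ₙ`. -/
theorem stmt12 (n : ℕ) (f : EuclideanSpace ℝ (Fin n) → ℝ) (hf : ContDiff ℝ 2 f)
    (L ρbar lambar η : ℝ) (hL : 0 < L)
    (hLip : ∀ θ θ' : EuclideanSpace ℝ (Fin n), ‖hess f θ - hess f θ'‖ ≤ L * ‖θ - θ'‖)
    (θstar : EuclideanSpace ℝ (Fin n)) (hmin : IsMinOn f Set.univ θstar)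
    (hgrad0 : gradient f θstar = 0)
    (Hhat HhatInv : EuclideanSpace ℝ (Fin n) →L[ℝ] EuclideanSpace ℝ (Fin n))
    (hsa : IsSelfAdjoint Hhat)
    (hlb : ∀ x : EuclideanSpace ℝ (Fin n), ρbar * ‖x‖ ^ 2 ≤ (inner ℝ x (Hhat x) : ℝ))
    (hinv₁ : HhatInv.comp Hhat = ContinuousLinearMap.id ℝ _)
    (hinv₂ : Hhat.comp HhatInv = ContinuousLinearMap.id ℝ _)
    (θk θt : EuclideanSpace ℝ (Fin n))
    (hclose : ‖Hhat - hess f θk‖ ≤ ρbar - lambar)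
    (hlam : 0 < lambar) (hrl : lambar ≤ ρbar)
    (hη : 0 < η) (hη1 : η ≤ 1) :
    ‖(θt - η • HhatInv (gradient f θt)) - θstar‖ ≤
      ((1 - lambar / ρbar) + (L / ρbar) * ‖θt - θk‖ + (1 - η) * ‖hess f θt‖ / ρbar) *
          ‖θt - θstar‖ +
        (η * L / (2 * ρbar)) * ‖θt - θstar‖ ^ 2 := by
  have hρ : (0:ℝ) < ρbar := hlam.trans_le hrl
  set e : EuclideanSpace ℝ (Fin n) := θt - θstar with he
  set g : EuclideanSpace ℝ (Fin n) := gradient f θt with hg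
  -- differentiability of the gradient
  have hgdiff : Differentiable ℝ (gradient f) := by
    have h1 : ContDiff ℝ 1 (fderiv ℝ f) := hf.fderiv_right (by norm_num)
    have h0 : gradient f = fun y =>
        (InnerProductSpace.toDual ℝ (EuclideanSpace ℝ (Fin n))).symm (fderiv ℝ f y) := rfl
    rw [h0]
    exact ((InnerProductSpace.toDual ℝ (EuclideanSpace ℝ (Fin n))).symm.differentiable).comp
      (h1.differentiable one_ne_zero)
  have hdiff : ∀ x : EuclideanSpace ℝ (Fin n), HasFDerivAt (gradient f) (hess f x) x :=
    fun x => (hgdiff x).hasFDerivAt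
  -- continuity of the Hessian
  have hhc : Continuous (hess f) := by
    have hl : LipschitzWith L.toNNReal (hess f) := by
      apply LipschitzWith.of_dist_le_mul
      intro x y
      rw [dist_eq_norm, dist_eq_norm, Real.coe_toNNReal L hL.le]
      exact hLip x y
    exact hl.continuous
  -- Key lemma A : Taylor bound  ‖g - H(θt) e‖ ≤ L/2 ‖e‖²
  have keyA : ‖g - hess f θt e‖ ≤ L / 2 * ‖e‖ ^ 2 := by
    set γ : ℝ → EuclideanSpace ℝ (Fin n) :=
      fun s => gradient f (θstar + s • e) - s • (hess f θt e) with hγdef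
    have hline : ∀ s : ℝ, HasDerivAt (fun s : ℝ => θstar + s • e) e s := fun s => by
      simpa using ((hasDerivAt_id s).smul_const e).const_add θstar
    have hγ : ∀ s : ℝ, HasDerivAt γ ((hess f (θstar + s • e) - hess f θt) e) s := by
      intro s
      have h1 : HasDerivAt (fun s : ℝ => gradient f (θstar + s • e))
          (hess f (θstar + s • e) e) s :=
        HasFDerivAt.comp_hasDerivAt (l := gradient f) s (hdiff (θstar + s • e)) (hline s)
      have h2 : HasDerivAt (fun s : ℝ => s • (hess f θt e)) (hess f θt e) s := by
        simpa using (hasDerivAt_id s).smul_const (hess f θt e)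
      exact h1.sub h2
    have hcont : Continuous fun s : ℝ => (hess f (θstar + s • e) - hess f θt) e := by
      have hA : Continuous fun s : ℝ => hess f (θstar + s • e) - hess f θt :=
        ((hhc.comp (continuous_const.add (continuous_id.smul continuous_const))).sub
          continuous_const)
      exact (ContinuousLinearMap.apply ℝ (EuclideanSpace ℝ (Fin n)) e).continuous.comp hA
    have hFTC : γ 1 - γ 0 = ∫ s in (0:ℝ)..1, (hess f (θstar + s • e) - hess f θt) e := by
      rw [intervalIntegral.integral_eq_sub_of_hasDerivAt (fun s _ => hγ s)
        (hcont.intervalIntegrable 0 1)]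
    have hγ1 : γ 1 - γ 0 = g - hess f θt e := by
      simp only [hγdef, one_smul, zero_smul, sub_zero, smul_zero, add_zero]
      have hθ : θstar + e = θt := by rw [he]; abel
      rw [hθ, hgrad0, hg]
      abel
    have hbound : ∀ s ∈ Set.uIoc (0:ℝ) 1,
        ‖(hess f (θstar + s • e) - hess f θt) e‖ ≤ L * (1 - s) * ‖e‖ ^ 2 := by
      intro s hs
      rw [Set.uIoc_of_le (by norm_num : (0:ℝ) ≤ 1)] at hs
      have hs0 : 0 < s := hs.1
      have hs1 : s ≤ 1 := hs.2
      have h1 : ‖(hess f (θstar + s • e) - hess f θt) e‖ ≤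
          ‖hess f (θstar + s • e) - hess f θt‖ * ‖e‖ :=
        (hess f (θstar + s • e) - hess f θt).le_opNorm e
      have h2 : ‖hess f (θstar + s • e) - hess f θt‖ ≤ L * ‖(θstar + s • e) - θt‖ :=
        hLip _ _
      have h3 : (θstar + s • e) - θt = (s - 1) • e := by
        have hθ : θt = θstar + e := by rw [he]; abel
        rw [hθ, sub_smul, one_smul]; abel
      have h4 : ‖(θstar + s • e) - θt‖ = (1 - s) * ‖e‖ := by
        rw [h3, norm_smul, Real.norm_eq_abs, abs_of_nonpos (by linarith), neg_sub]
      calc ‖(hess f (θstar + s • e) - hess f θt) e‖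
          ≤ ‖hess f (θstar + s • e) - hess f θt‖ * ‖e‖ := h1
        _ ≤ (L * ((1 - s) * ‖e‖)) * ‖e‖ := by
            apply mul_le_mul_of_nonneg_right _ (norm_nonneg e)
            rw [← h4]; exact h2
        _ = L * (1 - s) * ‖e‖ ^ 2 := by ring
    have hint : ∫ s in (0:ℝ)..1, L * (1 - s) * ‖e‖ ^ 2 = L / 2 * ‖e‖ ^ 2 := by
      have hfun : (fun s : ℝ => L * (1 - s) * ‖e‖ ^ 2)
          = fun s : ℝ => L * ‖e‖ ^ 2 - (L * ‖e‖ ^ 2) * s := by funext s; ring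
      rw [hfun, intervalIntegral.integral_sub intervalIntegrable_const
        (by apply Continuous.intervalIntegrable; fun_prop),
        intervalIntegral.integral_const, intervalIntegral.integral_const_mul]
      open intervalIntegral in rw [integral_id]
      simp [smul_eq_mul]
      ring
    calc ‖g - hess f θt e‖ = ‖γ 1 - γ 0‖ := by rw [hγ1]
      _ = ‖∫ s in (0:ℝ)..1, (hess f (θstar + s • e) - hess f θt) e‖ := by rw [hFTC]
      _ ≤ |∫ s in (0:ℝ)..1, L * (1 - s) * ‖e‖ ^ 2| := by
          apply intervalIntegral.norm_integral_le_abs_of_norm_le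
          · exact (MeasureTheory.ae_restrict_iff' measurableSet_uIoc).2
              (Filter.Eventually.of_forall hbound)
          · apply Continuous.intervalIntegrable; fun_prop
      _ = L / 2 * ‖e‖ ^ 2 := by rw [hint]; exact abs_of_nonneg (by positivity)
  -- Key lemma B : ‖Ĥ⁻¹ y‖ ≤ ‖y‖ / ρ̄
  have keyB : ∀ x : EuclideanSpace ℝ (Fin n), ρbar * ‖x‖ ≤ ‖Hhat x‖ := by
    intro x
    rcases eq_or_ne x 0 with rfl | hx
    · simp
    · have h1 := hlb x
      have h2 : (inner ℝ x (Hhat x) : ℝ) ≤ ‖x‖ * ‖Hhat x‖ := real_inner_le_norm x (Hhat x)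
      have hxpos : 0 < ‖x‖ := norm_pos_iff.2 hx
      nlinarith [h1, h2]
  -- the update vector
  set u : EuclideanSpace ℝ (Fin n) := (θt - η • HhatInv g) - θstar with hu
  have hHu : Hhat u = (Hhat - hess f θk) e + (hess f θk - hess f θt) e
      + (1 - η) • (hess f θt e) + η • (hess f θt e - g) := by
    have h2 : Hhat (HhatInv g) = g := by simpa using DFunLike.congr_fun hinv₂ g
    have h3 : u = e - η • HhatInv g := by rw [hu, he]; abel
    rw [h3, map_sub, map_smul, h2]
    simp only [ContinuousLinearMap.sub_apply, sub_smul, one_smul, smul_sub]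
    abel
  have hnorm : ‖Hhat u‖ ≤ (ρbar - lambar) * ‖e‖ + L * ‖θt - θk‖ * ‖e‖
      + (1 - η) * (‖hess f θt‖ * ‖e‖) + η * (L / 2 * ‖e‖ ^ 2) := by
    rw [hHu]
    have b1 : ‖(Hhat - hess f θk) e‖ ≤ (ρbar - lambar) * ‖e‖ :=
      le_trans ((Hhat - hess f θk).le_opNorm e)
        (mul_le_mul_of_nonneg_right hclose (norm_nonneg e))
    have b2 : ‖(hess f θk - hess f θt) e‖ ≤ L * ‖θt - θk‖ * ‖e‖ := by
      refine le_trans ((hess f θk - hess f θt).le_opNorm e)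
        (mul_le_mul_of_nonneg_right ?_ (norm_nonneg e))
      rw [show ‖θt - θk‖ = ‖θk - θt‖ from (norm_sub_rev _ _)]
      exact hLip _ _
    have b3 : ‖(1 - η) • (hess f θt e)‖ ≤ (1 - η) * (‖hess f θt‖ * ‖e‖) := by
      rw [norm_smul, Real.norm_eq_abs, abs_of_nonneg (by linarith)]
      exact mul_le_mul_of_nonneg_left ((hess f θt).le_opNorm e) (by linarith)
    have b4 : ‖η • (hess f θt e - g)‖ ≤ η * (L / 2 * ‖e‖ ^ 2) := by
      rw [norm_smul, Real.norm_eq_abs, abs_of_nonneg hη.le]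
      refine mul_le_mul_of_nonneg_left ?_ hη.le
      rw [norm_sub_rev]
      exact keyA
    calc ‖(Hhat - hess f θk) e + (hess f θk - hess f θt) e
          + (1 - η) • (hess f θt e) + η • (hess f θt e - g)‖
        ≤ ‖(Hhat - hess f θk) e + (hess f θk - hess f θt) e
            + (1 - η) • (hess f θt e)‖ + ‖η • (hess f θt e - g)‖ := norm_add_le _ _
      _ ≤ (‖(Hhat - hess f θk) e + (hess f θk - hess f θt) e‖
            + ‖(1 - η) • (hess f θt e)‖) + ‖η • (hess f θt e - g)‖ := by
          gcongr; exact norm_add_le _ _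
      _ ≤ ((‖(Hhat - hess f θk) e‖ + ‖(hess f θk - hess f θt) e‖)
            + ‖(1 - η) • (hess f θt e)‖) + ‖η • (hess f θt e - g)‖ := by
          gcongr; exact norm_add_le _ _
      _ ≤ (ρbar - lambar) * ‖e‖ + L * ‖θt - θk‖ * ‖e‖
          + (1 - η) * (‖hess f θt‖ * ‖e‖) + η * (L / 2 * ‖e‖ ^ 2) := by
          exact add_le_add (add_le_add (add_le_add b1 b2) b3) b4
  have hufin : ‖u‖ ≤ ‖Hhat u‖ / ρbar := by
    have h1 : ρbar * ‖u‖ ≤ ‖Hhat u‖ := keyB u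
    rw [le_div_iff₀ hρ]; linarith
  have hfinal : ‖u‖ ≤ ((ρbar - lambar) * ‖e‖ + L * ‖θt - θk‖ * ‖e‖
      + (1 - η) * (‖hess f θt‖ * ‖e‖) + η * (L / 2 * ‖e‖ ^ 2)) / ρbar :=
    hufin.trans ((div_le_div_iff_of_pos_right hρ).2 hnorm)
  calc ‖(θt - η • HhatInv g) - θstar‖ ≤ ((ρbar - lambar) * ‖e‖ + L * ‖θt - θk‖ * ‖e‖
      + (1 - η) * (‖hess f θt‖ * ‖e‖) + η * (L / 2 * ‖e‖ ^ 2)) / ρbar := hfinal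
    _ = ((1 - lambar / ρbar) + (L / ρbar) * ‖θt - θk‖ + (1 - η) * ‖hess f θt‖ / ρbar) *
          ‖e‖ + (η * L / (2 * ρbar)) * ‖e‖ ^ 2 := by
        exact stmt12_arith L ρbar lambar η ‖e‖ ‖θt - θk‖ ‖hess f θt‖ hρ.ne'
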